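/- arXiv:1107.0540 — 3 statements merged into one kernel-verified Lean document; each statement's English description precedes it below -/
import Mathlib

section
/- For a random variable Z with E|Z| < ∞ and p ∈ (0,1), the function g(θ) = E[|p − 1_{Z ≤ θ}|(Z − θ)] is strictly decreasing on the set I = {x ∈ ℝ : 0 < F_Z(x) < 1}, where F_Z is the cumulative distribution function of Z; hence the equation g(θ) = 0 has at most one solution on I. -/
open MeasureTheory

/-- The population estimating function g(θ) = E[|p − 1_{Z≤θ}|(Z−θ)] is strictly
decreasing on I = {x : 0 < F_Z(x) < 1}; hence g(θ) = 0 has at most one solution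
on I. -/
theorem estimating_function_strictAntiOn
    {Ω : Type*} [MeasurableSpace Ω] (μ : Measure Ω) [IsProbabilityMeasure μ]
    (Z : Ω → ℝ) (hZ : Integrable Z μ) (p : ℝ) (hp : p ∈ Set.Ioo (0:ℝ) 1) :
    StrictAntiOn
        (fun θ : ℝ => ∫ ω, |p - (if Z ω ≤ θ then (1:ℝ) else 0)| * (Z ω - θ) ∂μ)
        {x : ℝ | 0 < (μ {ω | Z ω ≤ x}).toReal ∧ (μ {ω | Z ω ≤ x}).toReal < 1} ∧
      ∀ θ₁ ∈ {x : ℝ | 0 < (μ {ω | Z ω ≤ x}).toReal ∧ (μ {ω | Z ω ≤ x}).toReal < 1},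
        ∀ θ₂ ∈ {x : ℝ | 0 < (μ {ω | Z ω ≤ x}).toReal ∧ (μ {ω | Z ω ≤ x}).toReal < 1},
          (∫ ω, |p - (if Z ω ≤ θ₁ then (1:ℝ) else 0)| * (Z ω - θ₁) ∂μ) = 0 →
          (∫ ω, |p - (if Z ω ≤ θ₂ then (1:ℝ) else 0)| * (Z ω - θ₂) ∂μ) = 0 →
          θ₁ = θ₂ := by
  obtain ⟨hp0, hp1⟩ := hp
  set m : ℝ := min p (1 - p) with hm
  have hm0 : 0 < m := lt_min hp0 (by linarith)
  have hm1 : m ≤ p := min_le_left _ _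
  have hm2 : m ≤ 1 - p := min_le_right _ _
  -- integrability of the integrand for every θ
  have hint : ∀ θ : ℝ,
      Integrable (fun ω => |p - (if Z ω ≤ θ then (1:ℝ) else 0)| * (Z ω - θ)) μ := by
    intro θ
    obtain ⟨Z', hZ'm, hZ'e⟩ := hZ.1
    have hmeas : AEStronglyMeasurable
        (fun ω => |p - (if Z ω ≤ θ then (1:ℝ) else 0)| * (Z ω - θ)) μ := by
      refine ⟨fun ω => |p - (if Z' ω ≤ θ then (1:ℝ) else 0)| * (Z' ω - θ),
        ?_, ?_⟩
      · apply Measurable.stronglyMeasurable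
        apply Measurable.mul
        · apply Measurable.abs
          exact measurable_const.sub
            (Measurable.ite (measurableSet_le hZ'm.measurable measurable_const)
              measurable_const measurable_const)
        · exact hZ'm.measurable.sub measurable_const
      · filter_upwards [hZ'e] with ω h
        simp [h]
    refine Integrable.mono (hZ.sub (integrable_const θ)) hmeas ?_
    refine Filter.Eventually.of_forall fun ω => ?_
    have habs : |p - (if Z ω ≤ θ then (1:ℝ) else 0)| ≤ 1 := by
      rw [abs_le]; split_ifs <;> constructor <;> linarith
    have h0 : (0:ℝ) ≤ |p - (if Z ω ≤ θ then (1:ℝ) else 0)| := abs_nonneg _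
    calc ‖|p - (if Z ω ≤ θ then (1:ℝ) else 0)| * (Z ω - θ)‖
        = |p - (if Z ω ≤ θ then (1:ℝ) else 0)| * ‖Z ω - θ‖ := by
          rw [norm_mul, Real.norm_eq_abs, abs_abs, Real.norm_eq_abs]
      _ ≤ 1 * ‖Z ω - θ‖ := by
          exact mul_le_mul_of_nonneg_right habs (norm_nonneg _)
      _ = ‖Z ω - θ‖ := one_mul _
  -- key pointwise inequality
  have key : ∀ θ₁ θ₂ : ℝ, θ₁ < θ₂ → ∀ z : ℝ,
      |p - (if z ≤ θ₂ then (1:ℝ) else 0)| * (z - θ₂) + m * (θ₂ - θ₁)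
        ≤ |p - (if z ≤ θ₁ then (1:ℝ) else 0)| * (z - θ₁) := by
    intro θ₁ θ₂ h z
    rcases le_or_gt z θ₁ with h1 | h1
    · rw [if_pos h1, if_pos (h1.trans h.le),
        abs_of_nonpos (by linarith : p - 1 ≤ 0)]
      nlinarith
    · rw [if_neg (not_le.mpr h1), sub_zero, abs_of_nonneg hp0.le]
      rcases le_or_gt z θ₂ with h2 | h2
      · rw [if_pos h2, abs_of_nonpos (by linarith : p - 1 ≤ 0)]
        nlinarith
      · rw [if_neg (not_le.mpr h2), sub_zero, abs_of_nonneg hp0.le]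
        nlinarith
  -- strict antitonicity on all of ℝ, hence on the set
  have hanti : ∀ a b : ℝ, a < b →
      (∫ ω, |p - (if Z ω ≤ b then (1:ℝ) else 0)| * (Z ω - b) ∂μ)
        < ∫ ω, |p - (if Z ω ≤ a then (1:ℝ) else 0)| * (Z ω - a) ∂μ := by
    intro a b hab
    have hmono := integral_mono ((hint b).add (integrable_const (m * (b - a))))
      (hint a) (fun ω => key a b hab (Z ω))
    simp only [Pi.add_apply] at hmono
    rw [integral_add (hint b) (integrable_const _), integral_const,
      probReal_univ] at hmono
    simp only [ENNReal.toReal_one, one_smul, smul_eq_mul] at hmono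
    have : 0 < m * (b - a) := mul_pos hm0 (by linarith)
    linarith
  constructor
  · intro a _ b _ hab
    exact hanti a b hab
  · intro θ₁ _ θ₂ _ h₁ h₂
    rcases lt_trichotomy θ₁ θ₂ with h | h | h
    · have := hanti θ₁ θ₂ h; rw [h₁, h₂] at this; linarith
    · exact h
    · have := hanti θ₂ θ₁ h; rw [h₁, h₂] at this; linarith
end

section
/- Let Y be a standard Gaussian random variable, p ∈ (0,1), θ > 0, and h(x) = x² (or more generally h(x) = |x|^β with β > 0). Then the function ψ̃(t) = |p − 1_{h(t) ≤ θ}|(h(t) − θ) − E[|p − 1_{h(Y) ≤ θ}|(h(Y) − θ)] has Hermite rank 2, i.e., E[ψ̃(Y)] = 0, E[ψ̃(Y)·Y] = 0, and E[ψ̃(Y)·(Y² − 1)] ≠ 0. -/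
open MeasureTheory ProbabilityTheory Real Filter Set
open scoped ENNReal NNReal

namespace PsiRankAux

noncomputable def E (x : ℝ) : ℝ := Real.exp (-x ^ 2 / 2)

lemma E_apply (x : ℝ) : E x = Real.exp (-x ^ 2 / 2) := rfl

lemma E_pos (x : ℝ) : 0 < E x := Real.exp_pos _

lemma E_abs (x : ℝ) : E |x| = E x := by simp [E, sq_abs]

lemma E_neg (x : ℝ) : E (-x) = E x := by simp [E]

lemma continuous_E : Continuous E := by
  unfold E
  exact Real.continuous_exp.comp ((continuous_pow 2).neg.div_const 2)

lemma integrable_comp_abs' {f : ℝ → ℝ} (hf : IntegrableOn f (Set.Ioi 0)) :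
    Integrable (fun x => f |x|) := by
  have hf' : IntegrableOn (fun x => f |x|) (Set.Ioi 0) :=
    hf.congr_fun (fun x hx => by rw [abs_of_pos hx]) measurableSet_Ioi
  have int_Iic : IntegrableOn (fun x ↦ f |x|) (Set.Iic 0) := by
    rw [← Measure.map_neg_eq_self (volume : Measure ℝ)]
    have m : MeasurableEmbedding fun x : ℝ => -x := (Homeomorph.neg ℝ).measurableEmbedding
    rw [m.integrableOn_map_iff]
    simp_rw [Function.comp_def, abs_neg, neg_preimage, neg_Iic, neg_zero]
    exact (integrableOn_Ici_iff_integrableOn_Ioi).mpr hf'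
  have h := int_Iic.union hf'
  rwa [Set.Iic_union_Ioi, integrableOn_univ] at h

lemma intOn_rpow_E {s : ℝ} (hs : -1 < s) :
    IntegrableOn (fun t : ℝ => t ^ s * E t) (Set.Ioi 0) := by
  have h0 : IntegrableOn (fun x : ℝ => x ^ s * Real.exp (-2⁻¹ * x ^ 2)) (Set.Ioi 0) :=
    integrableOn_rpow_mul_exp_neg_mul_sq (by norm_num) hs
  refine h0.congr_fun (fun x _ => ?_) measurableSet_Ioi
  rw [E_apply]
  congr 1
  ring

lemma integrable_rpow_abs_mul_E {s : ℝ} (hs : -1 < s) :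
    Integrable (fun x : ℝ => |x| ^ s * E x) := by
  have h := integrable_comp_abs' (intOn_rpow_E hs)
  refine h.congr (Filter.Eventually.of_forall fun x => ?_)
  simp only [E_abs]

lemma abs_rpow_two (y : ℝ) : |y| ^ (2:ℝ) = y ^ 2 := by
  rw [show ((2:ℝ)) = ((2:ℕ):ℝ) by norm_num, Real.rpow_natCast, sq_abs]

lemma abs_rpow_add_two {β : ℝ} (hβ : 0 < β) (y : ℝ) :
    |y| ^ (β + 2) = |y| ^ β * y ^ 2 := by
  rw [Real.rpow_add' (abs_nonneg y) (by positivity), abs_rpow_two]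

/-- The dominating function. -/
lemma integrable_Dm {β θ : ℝ} (hβ : 0 < β) (hθ : 0 < θ) :
    Integrable (fun y : ℝ => (|y| ^ β + (θ + 1)) * ((y ^ 2 + 1) * E y)) := by
  have i1 := integrable_rpow_abs_mul_E (s := β + 2) (by linarith)
  have i2 := integrable_rpow_abs_mul_E (s := β) (by linarith)
  have i3 : Integrable (fun y : ℝ => y ^ 2 * E y) := by
    have h := integrable_rpow_abs_mul_E (s := 2) (by norm_num)
    refine h.congr (Filter.Eventually.of_forall fun y => ?_)
    simp only [abs_rpow_two]
  have i4 : Integrable E := by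
    have h := integrable_rpow_abs_mul_E (s := 0) (by norm_num)
    refine h.congr (Filter.Eventually.of_forall fun y => ?_)
    simp only [Real.rpow_zero, one_mul]
  have h := (i1.add i2).add ((i3.add i4).const_mul (θ + 1))
  refine h.congr (Filter.Eventually.of_forall fun y => ?_)
  simp only [Pi.add_apply, abs_rpow_add_two hβ]
  ring

lemma pdf_eq (x : ℝ) :
    gaussianPDFReal 0 1 x = (Real.sqrt (2 * π))⁻¹ * E x := by
  rw [gaussianPDFReal, E_apply]
  norm_num

lemma pdf_le_E (x : ℝ) : gaussianPDFReal 0 1 x ≤ E x := by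
  rw [pdf_eq]
  have h1 : (1:ℝ) ≤ Real.sqrt (2 * π) := by
    rw [show (1:ℝ) = Real.sqrt 1 by simp]
    exact Real.sqrt_le_sqrt (by nlinarith [Real.pi_gt_three])
  have h2 : (Real.sqrt (2 * π))⁻¹ ≤ 1 := by
    apply inv_le_one_of_one_le₀ h1
  nlinarith [E_pos x, (E_pos x).le]

lemma gaussian_withDensity :
    gaussianReal 0 1
      = (volume : Measure ℝ).withDensity fun x => ((gaussianPDFReal 0 1 x).toNNReal : ℝ≥0∞) := by
  rw [gaussianReal_of_var_ne_zero 0 one_ne_zero, gaussianPDF_def]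
  rfl

lemma bridge (g : ℝ → ℝ) :
    ∫ y, g y ∂(gaussianReal 0 1) = ∫ y, gaussianPDFReal 0 1 y * g y := by
  rw [gaussian_withDensity,
    integral_withDensity_eq_integral_smul (measurable_gaussianPDFReal 0 1).real_toNNReal]
  congr 1
  funext x
  simp [NNReal.smul_def, Real.coe_toNNReal _ (gaussianPDFReal_nonneg 0 1 x)]

lemma int_gauss {β θ : ℝ} (hβ : 0 < β) (hθ : 0 < θ) {g : ℝ → ℝ}
    (hm : AEStronglyMeasurable g volume)
    (hb : ∀ y, |g y| ≤ (|y| ^ β + (θ + 1)) * (y ^ 2 + 1)) :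
    Integrable g (gaussianReal 0 1) := by
  rw [gaussian_withDensity]
  refine (integrable_withDensity_iff_integrable_smul
    (f := fun x => (gaussianPDFReal 0 1 x).toNNReal) (g := g)
    ((measurable_gaussianPDFReal 0 1).real_toNNReal)).mpr ?_
  have heq : (fun x => ((gaussianPDFReal 0 1 x).toNNReal : ℝ≥0) • g x)
      = fun x => gaussianPDFReal 0 1 x * g x := by
    funext x
    simp [NNReal.smul_def, Real.coe_toNNReal _ (gaussianPDFReal_nonneg 0 1 x)]
  rw [heq]
  refine (integrable_Dm hβ hθ).mono'
    (((measurable_gaussianPDFReal 0 1).aestronglyMeasurable).mul hm) ?_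
  refine Filter.Eventually.of_forall fun y => ?_
  have h1 : ‖gaussianPDFReal 0 1 y * g y‖ = gaussianPDFReal 0 1 y * |g y| := by
    rw [norm_mul, Real.norm_eq_abs, Real.norm_eq_abs,
      abs_of_nonneg (gaussianPDFReal_nonneg 0 1 y)]
  rw [h1]
  have h2 : gaussianPDFReal 0 1 y * |g y| ≤ E y * |g y| :=
    mul_le_mul_of_nonneg_right (pdf_le_E y) (abs_nonneg _)
  have h3 : E y * |g y| ≤ E y * ((|y| ^ β + (θ + 1)) * (y ^ 2 + 1)) :=
    mul_le_mul_of_nonneg_left (hb y) (E_pos y).le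
  calc gaussianPDFReal 0 1 y * |g y| ≤ E y * |g y| := h2
    _ ≤ E y * ((|y| ^ β + (θ + 1)) * (y ^ 2 + 1)) := h3
    _ = (|y| ^ β + (θ + 1)) * ((y ^ 2 + 1) * E y) := by ring

lemma integral_odd {f : ℝ → ℝ} (hf : ∀ x, f (-x) = -f x) : ∫ x, f x = 0 := by
  have h := integral_neg_eq_self f (volume : Measure ℝ)
  simp_rw [hf, integral_neg] at h
  linarith

lemma hasDerivAt_negmulE (y : ℝ) :
    HasDerivAt (fun t : ℝ => -(t * E t)) ((y ^ 2 - 1) * E y) y := by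
  have h1 : HasDerivAt (fun t : ℝ => -t ^ 2 / 2) (-y) y := by
    have h := (hasDerivAt_pow 2 y).neg.div_const 2
    norm_num at h
    refine h.congr_deriv ?_
    ring
  have h2 : HasDerivAt E (E y * -y) y := h1.exp
  have h3 := ((hasDerivAt_id y).mul h2).neg
  refine h3.congr_deriv ?_
  simp only [id_eq]
  ring

lemma continuous_rpow_const {β : ℝ} (hβ : 0 < β) : Continuous fun t : ℝ => t ^ β :=
  continuous_iff_continuousAt.2 fun x => Real.continuousAt_rpow_const x β (Or.inr hβ.le)

lemma ibp {β : ℝ} (hβ : 0 < β) (θ' b : ℝ) (hb : 0 ≤ b) :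
    ∫ y in (0:ℝ)..b, (y ^ β - θ') * ((y ^ 2 - 1) * E y)
      = β * (∫ y in (0:ℝ)..b, y ^ β * E y) + (b ^ β - θ') * (-(b * E b)) := by
  set U : ℝ → ℝ := fun t => (t ^ β - θ') * (-(t * E t)) with hU
  set G : ℝ → ℝ := fun t => (t ^ β - θ') * ((t ^ 2 - 1) * E t) - β * (t ^ β * E t) with hG
  have hcontβ : Continuous fun t : ℝ => t ^ β := continuous_rpow_const hβ
  have hcontU : ContinuousOn U (Set.Icc 0 b) :=
    ((hcontβ.sub continuous_const).mul ((continuous_id.mul continuous_E).neg)).continuousOn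
  have hcontG : Continuous G :=
    ((hcontβ.sub continuous_const).mul
        (((continuous_pow 2).sub continuous_const).mul continuous_E)).sub
      (continuous_const.mul (hcontβ.mul continuous_E))
  have hderiv : ∀ y ∈ Set.Ioo (0:ℝ) b, HasDerivWithinAt U (G y) (Set.Ioi y) y := by
    intro y hy
    have hy0 : (0:ℝ) < y := hy.1
    have hu : HasDerivAt (fun t : ℝ => t ^ β - θ') (β * y ^ (β - 1)) y :=
      (Real.hasDerivAt_rpow_const (Or.inl hy0.ne')).sub_const θ'
    have hv := hasDerivAt_negmulE y
    have hprod := hu.mul hv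
    refine HasDerivAt.hasDerivWithinAt ?_
    refine hprod.congr_deriv ?_
    have hr : y ^ (β - 1) * y = y ^ β := by
      rw [show β = β - 1 + 1 by ring, Real.rpow_add_one hy0.ne']
      ring_nf
    try simp only [hG]
    linear_combination (-(β * E y)) * hr
  have hGint : IntervalIntegrable G volume 0 b := hcontG.intervalIntegrable _ _
  have key := intervalIntegral.integral_eq_sub_of_hasDeriv_right_of_le hb hcontU hderiv hGint
  have hU0 : U 0 = 0 := by simp [hU]
  have h1 : IntervalIntegrable (fun y : ℝ => (y ^ β - θ') * ((y ^ 2 - 1) * E y)) volume 0 b :=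
    ((hcontβ.sub continuous_const).mul
      (((continuous_pow 2).sub continuous_const).mul continuous_E)).intervalIntegrable _ _
  have h2 : IntervalIntegrable (fun y : ℝ => β * (y ^ β * E y)) volume 0 b :=
    (continuous_const.mul (hcontβ.mul continuous_E)).intervalIntegrable _ _
  rw [hG] at key
  rw [intervalIntegral.integral_sub h1 h2, intervalIntegral.integral_const_mul, hU0, sub_zero]
    at key
  have hUb : U b = (b ^ β - θ') * (-(b * E b)) := rfl
  linarith [key]

lemma tendsto_rpow_E (s : ℝ) : Tendsto (fun b : ℝ => b ^ s * E b) atTop (nhds 0) := by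
  have h := tendsto_rpow_mul_exp_neg_mul_atTop_nhds_zero s (1/2) (by norm_num)
  refine squeeze_zero' ?_ ?_ h
  · filter_upwards [eventually_ge_atTop (0:ℝ)] with b hb
    exact mul_nonneg (Real.rpow_nonneg hb s) (E_pos b).le
  · filter_upwards [eventually_ge_atTop (1:ℝ)] with b hb
    have h1 : E b ≤ Real.exp (-(1/2) * b) := by
      rw [E_apply]
      apply Real.exp_le_exp.mpr
      nlinarith
    have h2 : (0:ℝ) ≤ b ^ s := Real.rpow_nonneg (by linarith) s
    nlinarith [mul_le_mul_of_nonneg_left h1 h2]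

lemma tendsto_boundary {β : ℝ} (hβ : 0 < β) (θ' : ℝ) :
    Tendsto (fun b : ℝ => (b ^ β - θ') * (-(b * E b))) atTop (nhds 0) := by
  have t1 : Tendsto (fun b : ℝ => b ^ (β + 1) * E b) atTop (nhds 0) := tendsto_rpow_E (β + 1)
  have t2 : Tendsto (fun b : ℝ => b * E b) atTop (nhds 0) := by
    have h := tendsto_rpow_E 1
    refine h.congr (fun b => ?_)
    rw [Real.rpow_one]
  have t3 : Tendsto (fun b : ℝ => -(b ^ (β + 1) * E b) + θ' * (b * E b)) atTop (nhds 0) := by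
    have := (t1.neg).add (t2.const_mul θ')
    simpa using this
  refine t3.congr' ?_
  filter_upwards [eventually_gt_atTop (0:ℝ)] with b hb
  have hr : b ^ (β + 1) = b ^ β * b := by
    rw [Real.rpow_add_one hb.ne']
  rw [hr]
  ring

lemma intOn_g0 {β : ℝ} (hβ : 0 < β) (θ' : ℝ) :
    IntegrableOn (fun t : ℝ => (t ^ β - θ') * ((t ^ 2 - 1) * E t)) (Set.Ioi 0) := by
  have i1 := intOn_rpow_E (s := β + 2) (by linarith)
  have i2 := intOn_rpow_E (s := β) (by linarith)
  have i3 : IntegrableOn (fun t : ℝ => t ^ 2 * E t) (Set.Ioi 0) := by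
    have h := intOn_rpow_E (s := 2) (by norm_num)
    refine h.congr_fun (fun t ht => ?_) measurableSet_Ioi
    dsimp only; rw [show ((2:ℝ)) = ((2:ℕ):ℝ) by norm_num, Real.rpow_natCast]
  have i4 : IntegrableOn E (Set.Ioi 0) := by
    have h := intOn_rpow_E (s := 0) (by norm_num)
    refine h.congr_fun (fun t ht => ?_) measurableSet_Ioi
    dsimp only; rw [Real.rpow_zero, one_mul]
  have h := (i1.sub i2).sub (((i3.sub i4)).const_mul θ')
  refine IntegrableOn.congr_fun h (fun t ht => ?_) measurableSet_Ioi
  have ht0 : (0:ℝ) < t := ht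
  have hr : t ^ (β + 2) = t ^ β * t ^ 2 := by
    rw [Real.rpow_add' ht0.le (ne_of_gt (by linarith))]
    rw [show ((2:ℝ)) = ((2:ℕ):ℝ) by norm_num, Real.rpow_natCast]
  simp only [Pi.sub_apply]
  rw [hr]
  ring

lemma integral_Ioi_g0 {β : ℝ} (hβ : 0 < β) (θ' : ℝ) :
    ∫ t in Set.Ioi (0:ℝ), (t ^ β - θ') * ((t ^ 2 - 1) * E t)
      = β * ∫ t in Set.Ioi (0:ℝ), t ^ β * E t := by
  have hNint : IntegrableOn (fun t : ℝ => t ^ β * E t) (Set.Ioi 0) :=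
    intOn_rpow_E (by linarith)
  have hlim1 : Tendsto (fun b : ℝ => ∫ t in (0:ℝ)..b, (t ^ β - θ') * ((t ^ 2 - 1) * E t))
      atTop (nhds (∫ t in Set.Ioi (0:ℝ), (t ^ β - θ') * ((t ^ 2 - 1) * E t))) :=
    intervalIntegral_tendsto_integral_Ioi 0 (intOn_g0 hβ θ') tendsto_id
  have hlim2 : Tendsto (fun b : ℝ => ∫ t in (0:ℝ)..b, (t ^ β - θ') * ((t ^ 2 - 1) * E t))
      atTop (nhds (β * (∫ t in Set.Ioi (0:ℝ), t ^ β * E t) + 0)) := by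
    have hmain := ((intervalIntegral_tendsto_integral_Ioi 0 hNint tendsto_id).const_mul β).add
      (tendsto_boundary hβ θ')
    refine hmain.congr' ?_
    filter_upwards [eventually_ge_atTop (0:ℝ)] with b hb
    exact (ibp hβ θ' b hb).symm
  have := tendsto_nhds_unique hlim1 hlim2
  simpa using this

lemma integral_sq_sub_one_E : ∫ y : ℝ, (y ^ 2 - 1) * E y = 0 := by
  have hf : ∀ y : ℝ, (y ^ 2 - 1) * E y = (fun t : ℝ => (t ^ 2 - 1) * E t) |y| := by
    intro y
    simp only [sq_abs, E_abs]
  have h1 : ∫ y : ℝ, (y ^ 2 - 1) * E y = 2 * ∫ t in Set.Ioi (0:ℝ), (t ^ 2 - 1) * E t := by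
    have h := integral_comp_abs (f := fun t : ℝ => (t ^ 2 - 1) * E t)
    rw [← h]
    congr 1
    funext x
    simp [sq_abs, E_abs]
  have hint : IntegrableOn (fun t : ℝ => (t ^ 2 - 1) * E t) (Set.Ioi 0) := by
    have i3 : IntegrableOn (fun t : ℝ => t ^ 2 * E t) (Set.Ioi 0) := by
      have h := intOn_rpow_E (s := 2) (by norm_num)
      refine h.congr_fun (fun t ht => ?_) measurableSet_Ioi
      dsimp only; rw [show ((2:ℝ)) = ((2:ℕ):ℝ) by norm_num, Real.rpow_natCast]
    have i4 : IntegrableOn E (Set.Ioi 0) := by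
      have h := intOn_rpow_E (s := 0) (by norm_num)
      refine h.congr_fun (fun t ht => ?_) measurableSet_Ioi
      dsimp only; rw [Real.rpow_zero, one_mul]
    have h := i3.sub i4
    refine IntegrableOn.congr_fun h (fun t ht => ?_) measurableSet_Ioi
    simp only [Pi.sub_apply]
    ring
  have hlim1 : Tendsto (fun b : ℝ => ∫ t in (0:ℝ)..b, (t ^ 2 - 1) * E t)
      atTop (nhds (∫ t in Set.Ioi (0:ℝ), (t ^ 2 - 1) * E t)) :=
    intervalIntegral_tendsto_integral_Ioi 0 hint tendsto_id
  have hftc : ∀ b : ℝ, ∫ t in (0:ℝ)..b, (t ^ 2 - 1) * E t = -(b * E b) := by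
    intro b
    have h := intervalIntegral.integral_eq_sub_of_hasDerivAt
      (a := (0:ℝ)) (b := b)
      (f := fun t : ℝ => -(t * E t)) (f' := fun t : ℝ => (t ^ 2 - 1) * E t)
      (fun x _ => hasDerivAt_negmulE x)
      ((((continuous_pow 2).sub continuous_const).mul continuous_E).intervalIntegrable _ _)
    rw [h]
    simp
  have hlim2 : Tendsto (fun b : ℝ => ∫ t in (0:ℝ)..b, (t ^ 2 - 1) * E t) atTop (nhds 0) := by
    have t2 : Tendsto (fun b : ℝ => -(b * E b)) atTop (nhds 0) := by
      have h := tendsto_rpow_E 1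
      have h' : Tendsto (fun b : ℝ => b * E b) atTop (nhds 0) :=
        h.congr fun b => by rw [Real.rpow_one]
      simpa using h'.neg
    exact t2.congr fun b => (hftc b).symm
  have := tendsto_nhds_unique hlim1 hlim2
  rw [h1, this, mul_zero]

lemma abs_sub_le_add {A t : ℝ} (hA : 0 ≤ A) (ht : 0 ≤ t) : |A - t| ≤ A + t := by
  rw [abs_le]; constructor <;> nlinarith

end PsiRankAux

open PsiRankAux in
/-- For h(x) = |x|^β (β > 0, in particular h(x) = x² for β = 2), p ∈ (0,1) and θ > 0,
the centered function ψ̃(t) = |p − 1_{h(t)≤θ}|(h(t) − θ) − E[|p − 1_{h(Y)≤θ}|(h(Y) − θ)]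
has Hermite rank 2: E[ψ̃(Y)] = 0, E[ψ̃(Y)Y] = 0, E[ψ̃(Y)(Y² − 1)] ≠ 0, Y ∼ N(0,1). -/
theorem psi_tilde_hermite_rank_two
    (β : ℝ) (hβ : 0 < β) (p θ : ℝ) (hp : p ∈ Set.Ioo (0:ℝ) 1) (hθ : 0 < θ) :
    let h : ℝ → ℝ := fun x => |x| ^ β
    let ψt : ℝ → ℝ := fun t =>
      |p - (if h t ≤ θ then (1:ℝ) else 0)| * (h t - θ) -
        ∫ y, |p - (if h y ≤ θ then (1:ℝ) else 0)| * (h y - θ) ∂(gaussianReal 0 1)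
    (∫ y, ψt y ∂(gaussianReal 0 1)) = 0 ∧
      (∫ y, ψt y * y ∂(gaussianReal 0 1)) = 0 ∧
      (∫ y, ψt y * (y ^ 2 - 1) ∂(gaussianReal 0 1)) ≠ 0 := by
  intro h ψt
  obtain ⟨hp0, hp1⟩ := hp
  set w : ℝ → ℝ := fun t => |p - (if |t| ^ β ≤ θ then (1:ℝ) else 0)| with hwdef
  set ψ : ℝ → ℝ := fun t => w t * (|t| ^ β - θ) with hψdef
  have hψt : ∀ t, ψt t = ψ t - ∫ y, ψ y ∂(gaussianReal 0 1) := fun t => rfl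
  set c₀ : ℝ := ∫ y, ψ y ∂(gaussianReal 0 1) with hc₀
  -- basic measurability and continuity
  have hcontβabs : Continuous fun t : ℝ => |t| ^ β :=
    (continuous_rpow_const hβ).comp continuous_abs
  have hSmeas : MeasurableSet {t : ℝ | |t| ^ β ≤ θ} :=
    measurableSet_le hcontβabs.measurable measurable_const
  have hwmeas : Measurable w := by
    rw [hwdef]
    exact (measurable_const.sub (Measurable.ite hSmeas measurable_const measurable_const)).abs
  have hψmeas : Measurable ψ := by
    rw [hψdef]
    exact hwmeas.mul (hcontβabs.measurable.sub measurable_const)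
  -- bounds
  have hw0 : ∀ t, 0 ≤ w t := fun t => abs_nonneg _
  have hw1 : ∀ t, w t ≤ 1 := by
    intro t
    simp only [hwdef]
    by_cases hc : |t| ^ β ≤ θ
    · rw [if_pos hc, abs_of_nonpos (by linarith)]; linarith
    · rw [if_neg hc, sub_zero, abs_of_pos hp0]; linarith
  have hbψ' : ∀ y, |ψ y| ≤ |y| ^ β + θ := by
    intro y
    have hA : (0:ℝ) ≤ |y| ^ β := Real.rpow_nonneg (abs_nonneg y) β
    have h1 : |ψ y| = w y * abs (|y| ^ β - θ) := by
      simp only [hψdef]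
      rw [abs_mul, abs_of_nonneg (hw0 y)]
    rw [h1]
    have h2 := abs_sub_le_add hA hθ.le
    nlinarith [abs_nonneg (|y| ^ β - θ), hw1 y, hw0 y]
  have hsq : ∀ y : ℝ, |y| ≤ y ^ 2 + 1 := by
    intro y
    nlinarith [sq_nonneg (|y| - 1), sq_abs y, abs_nonneg y]
  -- integrability over the gaussian
  have hq2 : ∀ y : ℝ, |y ^ 2 - 1| ≤ y ^ 2 + 1 := by
    intro y; rw [abs_le]; constructor <;> nlinarith [sq_nonneg y]
  have hInt1 : Integrable ψ (gaussianReal 0 1) := by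
    refine int_gauss hβ hθ hψmeas.aestronglyMeasurable fun y => ?_
    have hA : (0:ℝ) ≤ |y| ^ β := Real.rpow_nonneg (abs_nonneg y) β
    nlinarith [hbψ' y, sq_nonneg y]
  have hIntId : Integrable (fun y : ℝ => y) (gaussianReal 0 1) := by
    refine int_gauss hβ hθ measurable_id.aestronglyMeasurable fun y => ?_
    have hA : (0:ℝ) ≤ |y| ^ β := Real.rpow_nonneg (abs_nonneg y) β
    nlinarith [hsq y, sq_nonneg y]
  have hIntψy : Integrable (fun y => ψ y * y) (gaussianReal 0 1) := by
    refine int_gauss hβ hθ (hψmeas.mul measurable_id).aestronglyMeasurable fun y => ?_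
    have hA : (0:ℝ) ≤ |y| ^ β := Real.rpow_nonneg (abs_nonneg y) β
    have h1 : |ψ y * y| ≤ (|y| ^ β + θ) * |y| := by
      rw [abs_mul]
      exact mul_le_mul_of_nonneg_right (hbψ' y) (abs_nonneg y)
    nlinarith [hsq y, sq_nonneg y, abs_nonneg y]
  have hIntq : Integrable (fun y : ℝ => y ^ 2 - 1) (gaussianReal 0 1) := by
    refine int_gauss hβ hθ ((measurable_id.pow_const 2).sub measurable_const).aestronglyMeasurable
      fun y => ?_
    have hA : (0:ℝ) ≤ |y| ^ β := Real.rpow_nonneg (abs_nonneg y) β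
    nlinarith [hq2 y, sq_nonneg y]
  have hIntψq : Integrable (fun y => ψ y * (y ^ 2 - 1)) (gaussianReal 0 1) := by
    refine int_gauss hβ hθ
      (hψmeas.mul ((measurable_id.pow_const 2).sub measurable_const)).aestronglyMeasurable
      fun y => ?_
    have hA : (0:ℝ) ≤ |y| ^ β := Real.rpow_nonneg (abs_nonneg y) β
    have h1 : |ψ y * (y ^ 2 - 1)| ≤ (|y| ^ β + θ) * (y ^ 2 + 1) := by
      rw [abs_mul]
      exact mul_le_mul (hbψ' y) (hq2 y) (abs_nonneg _) (by positivity)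
    nlinarith [sq_nonneg y]
  -- evenness
  have hψeven : ∀ x, ψ (-x) = ψ x := by
    intro x
    simp only [hψdef, hwdef, abs_neg]
  have hpdf_even : ∀ x, gaussianPDFReal 0 1 (-x) = gaussianPDFReal 0 1 x := by
    intro x; rw [pdf_eq, pdf_eq, E_neg]
  -- zero integrals
  have hzero_id : ∫ y, (fun y : ℝ => y) y ∂(gaussianReal 0 1) = 0 := by
    rw [bridge]
    refine integral_odd fun x => ?_
    rw [hpdf_even]; ring
  have hzero_ψy : ∫ y, ψ y * y ∂(gaussianReal 0 1) = 0 := by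
    rw [bridge]
    refine integral_odd fun x => ?_
    rw [hpdf_even, hψeven]; ring
  have hzero_q : ∫ y, (fun y : ℝ => y ^ 2 - 1) y ∂(gaussianReal 0 1) = 0 := by
    rw [bridge]
    have hpt : ∀ y : ℝ, gaussianPDFReal 0 1 y * (y ^ 2 - 1)
        = (Real.sqrt (2 * π))⁻¹ * ((y ^ 2 - 1) * E y) := by
      intro y; rw [pdf_eq]; ring
    simp only [hpt]
    rw [integral_const_mul, integral_sq_sub_one_E, mul_zero]
  refine ⟨?_, ?_, ?_⟩
  · simp only [hψt]
    rw [integral_sub hInt1 (integrable_const c₀), integral_const]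
    simp [hc₀]
  · simp only [hψt, sub_mul]
    rw [integral_sub hIntψy (hIntId.const_mul c₀)]
    rw [integral_const_mul, hzero_ψy, hzero_id, mul_zero, sub_zero]
  · -- hermite rank 2 part
    set a : ℝ := θ ^ β⁻¹ with ha
    have ha0 : 0 < a := Real.rpow_pos_of_pos hθ _
    have haβ : a ^ β = θ := Real.rpow_inv_rpow hθ.le hβ.ne'
    have hiff : ∀ y : ℝ, (|y| ^ β ≤ θ ↔ y ∈ Set.Icc (-a) a) := by
      intro y
      rw [Set.mem_Icc, ← abs_le, ← haβ]
      exact Real.rpow_le_rpow_iff (abs_nonneg y) ha0.le hβ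
    set F : ℝ → ℝ := fun y => (|y| ^ β - θ) * ((y ^ 2 - 1) * E y) with hFdef
    have hFcont : Continuous F := by
      rw [hFdef]
      exact (hcontβabs.sub continuous_const).mul
        (((continuous_pow 2).sub continuous_const).mul continuous_E)
    have hFbound : ∀ y, |F y| ≤ (|y| ^ β + (θ + 1)) * ((y ^ 2 + 1) * E y) := by
      intro y
      have hA : (0:ℝ) ≤ |y| ^ β := Real.rpow_nonneg (abs_nonneg y) β
      have h1 : |F y| = abs (|y| ^ β - θ) * (|y ^ 2 - 1| * E y) := by
        simp only [hFdef]
        rw [abs_mul, abs_mul, abs_of_pos (E_pos y)]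
      rw [h1]
      have h2 := abs_sub_le_add hA hθ.le
      have h3 := hq2 y
      have h4 : abs (|y| ^ β - θ) * (|y ^ 2 - 1| * E y)
          ≤ (|y| ^ β + θ) * ((y ^ 2 + 1) * E y) :=
        mul_le_mul h2 (mul_le_mul_of_nonneg_right h3 (E_pos y).le)
          (mul_nonneg (abs_nonneg _) (E_pos y).le) (by linarith)
      have h5 : (|y| ^ β + θ) * ((y ^ 2 + 1) * E y)
          ≤ (|y| ^ β + (θ + 1)) * ((y ^ 2 + 1) * E y) :=
        mul_le_mul_of_nonneg_right (by linarith)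
          (mul_nonneg (by nlinarith [sq_nonneg y]) (E_pos y).le)
      linarith
    have hIntwF : Integrable (fun y => w y * F y) volume := by
      refine (integrable_Dm hβ hθ).mono'
        (hwmeas.mul hFcont.measurable).aestronglyMeasurable
        (Filter.Eventually.of_forall fun y => ?_)
      have h1 : ‖w y * F y‖ = w y * |F y| := by
        rw [Real.norm_eq_abs, abs_mul, abs_of_nonneg (hw0 y)]
      rw [h1]
      calc w y * |F y| ≤ 1 * |F y| :=
            mul_le_mul_of_nonneg_right (hw1 y) (abs_nonneg _)
        _ = |F y| := one_mul _
        _ ≤ (|y| ^ β + (θ + 1)) * ((y ^ 2 + 1) * E y) := hFbound y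
    have hIntF : Integrable F volume := by
      refine (integrable_Dm hβ hθ).mono' hFcont.aestronglyMeasurable
        (Filter.Eventually.of_forall fun y => ?_)
      rw [Real.norm_eq_abs]
      exact hFbound y
    -- splitting
    have hmeasIcc : MeasurableSet (Set.Icc (-a) a) := measurableSet_Icc
    have e0 := MeasureTheory.integral_add_compl hmeasIcc hIntwF
    have e1 : ∫ y in Set.Icc (-a) a, w y * F y = (1 - p) * ∫ y in Set.Icc (-a) a, F y := by
      rw [← integral_const_mul]
      refine setIntegral_congr_fun hmeasIcc fun y hy => ?_
      have hc : |y| ^ β ≤ θ := (hiff y).mpr hy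
      simp only [hwdef, if_pos hc]
      rw [abs_of_nonpos (by linarith)]
      ring
    have e2 : ∫ y in (Set.Icc (-a) a)ᶜ, w y * F y
        = p * ∫ y in (Set.Icc (-a) a)ᶜ, F y := by
      rw [← integral_const_mul]
      refine setIntegral_congr_fun hmeasIcc.compl fun y hy => ?_
      have hc : ¬ (|y| ^ β ≤ θ) := fun hcc => hy ((hiff y).mp hcc)
      simp only [hwdef, if_neg hc, sub_zero]
      rw [abs_of_pos hp0]
    -- compute I over the interval
    have hIcc : ∫ y in Set.Icc (-a) a, F y
        = 2 * ∫ y in (0:ℝ)..a, (y ^ β - θ) * ((y ^ 2 - 1) * E y) := by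
      rw [MeasureTheory.integral_Icc_eq_integral_Ioc,
        ← intervalIntegral.integral_of_le (by linarith : -a ≤ a),
        ← intervalIntegral.integral_add_adjacent_intervals
          (hFcont.intervalIntegrable (-a) 0) (hFcont.intervalIntegrable 0 a)]
      have hneg : ∫ y in (-a)..(0:ℝ), F y = ∫ y in (0:ℝ)..a, F y := by
        have hcn := intervalIntegral.integral_comp_neg (a := (0:ℝ)) (b := a) (f := F)
        rw [neg_zero] at hcn
        rw [← hcn]
        refine intervalIntegral.integral_congr fun x _ => ?_
        simp only [hFdef, abs_neg, neg_sq, E_neg]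
      have hpos' : ∫ y in (0:ℝ)..a, F y
          = ∫ y in (0:ℝ)..a, (y ^ β - θ) * ((y ^ 2 - 1) * E y) := by
        refine intervalIntegral.integral_congr fun x hx => ?_
        rw [Set.uIcc_of_le ha0.le] at hx
        simp only [hFdef]
        rw [abs_of_nonneg hx.1]
      rw [hneg, hpos']
      ring
    have hibp_a := ibp hβ θ a ha0.le
    rw [haβ, sub_self, zero_mul, add_zero] at hibp_a
    set M : ℝ := ∫ y in (0:ℝ)..a, y ^ β * E y with hM
    have hMpos : 0 < M := by
      rw [hM]
      refine intervalIntegral.intervalIntegral_pos_of_pos_on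
        (((continuous_rpow_const hβ).mul continuous_E).intervalIntegrable _ _)
        (fun x hx => ?_) ha0
      exact mul_pos (Real.rpow_pos_of_pos hx.1 β) (E_pos x)
    set N : ℝ := ∫ t in Set.Ioi (0:ℝ), t ^ β * E t with hN
    have hB : ∫ y, F y = 2 * (β * N) := by
      have hca := integral_comp_abs (f := fun t : ℝ => (t ^ β - θ) * ((t ^ 2 - 1) * E t))
      have hFeq : (fun y : ℝ => F y)
          = fun y : ℝ => (fun t : ℝ => (t ^ β - θ) * ((t ^ 2 - 1) * E t)) |y| := by
        funext y
        simp only [hFdef, sq_abs, E_abs]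
      rw [hFeq, hca, integral_Ioi_g0 hβ θ, hN]
    have hMN : M ≤ N := by
      rw [hM, hN, intervalIntegral.integral_of_le ha0.le]
      refine setIntegral_mono_set (intOn_rpow_E (by linarith)) ?_ ?_
      · filter_upwards [ae_restrict_mem measurableSet_Ioi] with t ht
        exact mul_nonneg (Real.rpow_pos_of_pos ht β).le (E_pos t).le
      · exact HasSubset.Subset.eventuallyLE Set.Ioc_subset_Ioi_self
    -- positivity of the weighted integral
    have hKpos : 0 < ∫ y, w y * F y := by
      have hI : ∫ y in Set.Icc (-a) a, F y = 2 * (β * M) := by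
        rw [hIcc, hibp_a, hM]
      have hJ : ∫ y in (Set.Icc (-a) a)ᶜ, F y
          = 2 * (β * N) - 2 * (β * M) := by
        have := MeasureTheory.integral_add_compl hmeasIcc hIntF
        rw [hI] at this
        rw [← hB]
        linarith
      have hK : ∫ y, w y * F y
          = (1 - p) * (2 * (β * M)) + p * (2 * (β * N) - 2 * (β * M)) := by
        rw [← e0, e1, e2, hI, hJ]
      have t1 : 0 < (1 - p) * (2 * (β * M)) :=
        mul_pos (by linarith) (mul_pos two_pos (mul_pos hβ hMpos))
      have t2 : 0 ≤ p * (2 * (β * N) - 2 * (β * M)) :=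
        mul_nonneg hp0.le (by nlinarith [hMN, hβ])
      rw [hK]
      linarith
    -- conclude
    have hpos : 0 < ∫ y, ψ y * (y ^ 2 - 1) ∂(gaussianReal 0 1) := by
      rw [bridge]
      have hpt : ∀ y : ℝ, gaussianPDFReal 0 1 y * (ψ y * (y ^ 2 - 1))
          = (Real.sqrt (2 * π))⁻¹ * (w y * F y) := by
        intro y
        rw [pdf_eq]
        simp only [hψdef, hFdef]
        ring
      simp only [hpt]
      rw [integral_const_mul]
      have hc : (0:ℝ) < (Real.sqrt (2 * π))⁻¹ := by
        have : (0:ℝ) < Real.sqrt (2 * π) := Real.sqrt_pos.mpr (by positivity)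
        positivity
      exact mul_pos hc hKpos
    simp only [hψt, sub_mul]
    rw [integral_sub hIntψq (hIntq.const_mul c₀)]
    rw [integral_const_mul, hzero_q, mul_zero, sub_zero]
    exact ne_of_gt hpos
end

section
/- Ghosh's lemma: let (V_n) and (W_n) be sequences of real random variables such that (a) for all δ > 0 there exists ε(δ) with P(|W_n| > ε(δ)) < δ for all n, and (b) for all y ∈ ℝ and ε > 0, P(V_n ≤ y, W_n ≥ y + ε) → 0 and P(V_n ≥ y + ε, W_n ≤ y) → 0 as n → ∞. Then V_n − W_n → 0 in probability. -/
open MeasureTheory Filter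

/-- Ghosh's lemma: if (a) W_n is uniformly tight in the sense that for all δ > 0
there is ε with P(|W_n| > ε) < δ for all n, and (b) for all y and ε > 0,
P(V_n ≤ y, W_n ≥ y + ε) → 0 and P(V_n ≥ y + ε, W_n ≤ y) → 0, then
V_n − W_n → 0 in probability. -/
theorem ghosh_lemma
    {Ω : Type*} [MeasurableSpace Ω] (μ : Measure Ω) [IsProbabilityMeasure μ]
    (V W : ℕ → Ω → ℝ)
    (ha : ∀ δ : ℝ, 0 < δ → ∃ ε : ℝ, 0 < ε ∧ ∀ n : ℕ,
        μ {ω | ε < |W n ω|} < ENNReal.ofReal δ)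
    (hb : ∀ y : ℝ, ∀ ε : ℝ, 0 < ε →
        Tendsto (fun n => μ {ω | V n ω ≤ y ∧ y + ε ≤ W n ω}) atTop (nhds 0) ∧
        Tendsto (fun n => μ {ω | y + ε ≤ V n ω ∧ W n ω ≤ y}) atTop (nhds 0)) :
    ∀ ε : ℝ, 0 < ε →
      Tendsto (fun n => μ {ω | ε < |V n ω - W n ω|}) atTop (nhds 0) := by
  intro ε hε
  rw [ENNReal.tendsto_atTop_zero]
  intro η hη
  obtain ⟨δ, hδ, hδη⟩ : ∃ δ : ℝ, 0 < δ ∧ ENNReal.ofReal δ ≤ η := by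
    rcases eq_or_ne η ⊤ with h | h
    · exact ⟨1, one_pos, by simp [h]⟩
    · exact ⟨η.toReal, ENNReal.toReal_pos hη.ne' h, by rw [ENNReal.ofReal_toReal h]⟩
  obtain ⟨K, hK, hKW⟩ := ha (δ / 2) (by positivity)
  set m : ℕ := ⌈(2 * (2 * K + ε)) / ε⌉₊ with hm
  set y : ℕ → ℝ := fun i => -K - ε + i * (ε / 2) with hy
  have hgrid : ∀ a : ℝ, -K - ε ≤ a → a ≤ K →
      ∃ i ≤ m, a ≤ y i ∧ y i ≤ a + ε / 2 := by
    intro a ha1 ha2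
    have hx0 : (0:ℝ) ≤ 2 * (a + K + ε) / ε := by
      apply div_nonneg _ hε.le
      linarith
    refine ⟨⌈(2 * (a + K + ε)) / ε⌉₊, ?_, ?_, ?_⟩
    · exact Nat.ceil_le_ceil (by gcongr; linarith)
    · have h1 : (2 * (a + K + ε)) / ε ≤ (⌈(2 * (a + K + ε)) / ε⌉₊ : ℝ) := Nat.le_ceil _
      have h2 : (2 * (a + K + ε)) / ε * ε = 2 * (a + K + ε) := div_mul_cancel₀ _ hε.ne'
      simp only [hy]
      nlinarith [mul_le_mul_of_nonneg_right h1 hε.le]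
    · have h1 : ((⌈(2 * (a + K + ε)) / ε⌉₊ : ℝ)) < (2 * (a + K + ε)) / ε + 1 :=
        Nat.ceil_lt_add_one hx0
      have h2 : (2 * (a + K + ε)) / ε * ε = 2 * (a + K + ε) := div_mul_cancel₀ _ hε.ne'
      simp only [hy]
      nlinarith [mul_lt_mul_of_pos_right h1 hε]
  set A : ℕ → ℕ → Set Ω := fun i n => {ω | V n ω ≤ y i ∧ y i + ε / 2 ≤ W n ω} with hA
  set B : ℕ → ℕ → Set Ω := fun i n => {ω | y i + ε / 2 ≤ V n ω ∧ W n ω ≤ y i} with hB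
  have hincl : ∀ n, {ω | ε < |V n ω - W n ω|} ⊆
      {ω | K < |W n ω|} ∪ ⋃ i ∈ Finset.range (m + 1), (A i n ∪ B i n) := by
    intro n ω hω
    by_cases hWb : K < |W n ω|
    · exact Or.inl hWb
    · right
      push_neg at hWb
      have hW1 : -K ≤ W n ω := neg_le_of_abs_le hWb
      have hW2 : W n ω ≤ K := le_of_abs_le hWb
      simp only [Set.mem_setOf_eq] at hω
      rcases lt_abs.mp hω with h | h
      · -- ε < V - W : use B
        obtain ⟨i, him, h1, h2⟩ := hgrid (W n ω) (by linarith) hW2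
        refine Set.mem_biUnion (Finset.mem_range.mpr (Nat.lt_succ_of_le him)) ?_
        exact Or.inr ⟨by linarith, h1⟩
      · -- ε < W - V : use A
        obtain ⟨i, him, h1, h2⟩ := hgrid (W n ω - ε) (by linarith) (by linarith)
        refine Set.mem_biUnion (Finset.mem_range.mpr (Nat.lt_succ_of_le him)) ?_
        exact Or.inl ⟨by linarith, by linarith⟩
  have hsum : Tendsto (fun n => ∑ i ∈ Finset.range (m + 1), μ (A i n ∪ B i n))
      atTop (nhds 0) := by
    have : Tendsto (fun n => ∑ i ∈ Finset.range (m + 1),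
        (μ (A i n) + μ (B i n))) atTop (nhds 0) := by
      have h0 : (0 : ENNReal) = ∑ _i ∈ Finset.range (m + 1), (0 + 0) := by simp
      rw [h0]
      apply tendsto_finset_sum
      intro i _
      exact ((hb (y i) (ε / 2) (by positivity)).1.add (hb (y i) (ε / 2) (by positivity)).2)
    exact tendsto_of_tendsto_of_tendsto_of_le_of_le tendsto_const_nhds this
      (fun n => zero_le)
      (fun n => Finset.sum_le_sum fun i _ => measure_union_le _ _)
  have hev : ∀ᶠ n in atTop, ∑ i ∈ Finset.range (m + 1), μ (A i n ∪ B i n)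
      < ENNReal.ofReal (δ / 2) := by
    apply hsum.eventually_lt_const
    simp [ENNReal.ofReal_pos, hδ]
  obtain ⟨N, hN⟩ := eventually_atTop.mp hev
  refine ⟨N, fun n hn' => ?_⟩
  have hn := hN n hn'
  calc μ {ω | ε < |V n ω - W n ω|}
      ≤ μ ({ω | K < |W n ω|} ∪ ⋃ i ∈ Finset.range (m + 1), (A i n ∪ B i n)) :=
        measure_mono (hincl n)
    _ ≤ μ {ω | K < |W n ω|} + μ (⋃ i ∈ Finset.range (m + 1), (A i n ∪ B i n)) :=
        measure_union_le _ _
    _ ≤ μ {ω | K < |W n ω|} + ∑ i ∈ Finset.range (m + 1), μ (A i n ∪ B i n) := by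
        gcongr
        exact measure_biUnion_finset_le _ _
    _ ≤ ENNReal.ofReal (δ / 2) + ENNReal.ofReal (δ / 2) := by
        exact add_le_add (hKW n).le hn.le
    _ = ENNReal.ofReal δ := by
        rw [← ENNReal.ofReal_add (by positivity) (by positivity)]
        ring_nf
    _ ≤ η := hδη
end
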